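/- arXiv:2305.18115 — 2 statements merged into one kernel-verified Lean document; each statement's English description precedes it below -/
import Mathlib

section
/- For any monoid M, the relation ≡ defined by p ≡ p' iff first_1(p) = first_1(p') and first_1^R(p) = first_1^R(p') is the smallest clone congruence of P(M) relating 1^e 1^e with 1^e (in arity 1) and relating, for all α_1, α_2, α_3 ∈ M, the word 1^{α_1} 2^e 1^{α_2} 3^e 1^{α_3} with the word 1^{α_1} 2^e 3^e 1^{α_3} (in arity 3): ≡ is a clone congruence relating these pairs, and every clone congruence of P(M) relating all these pairs contains ≡. -/
/-- An `M`-pigmented word of arity `n`: a list of letters `(i, α)` whose value is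
`i ∈ Fin n` (representing the value `i + 1 ∈ {1, …, n}`) and whose pigment is `α ∈ M`. -/
abbrev PW (M : Type*) (n : ℕ) : Type _ := List (Fin n × M)

/-- The superposition `p⟨q 0, …, q (n-1)⟩` of pigmented words. -/
def pwSuper {M : Type*} [Monoid M] {n m : ℕ} (p : PW M n) (q : Fin n → PW M m) : PW M m :=
  p.flatMap (fun l => (q l.1).map (fun x => (x.1, l.2 * x.2)))

/-- A clone congruence of `P(M)`: an arity-indexed family of relations compatible
with the superposition maps. -/
def IsCloneCong {M : Type*} [Monoid M] (r : ∀ n, PW M n → PW M n → Prop) : Prop :=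
  ∀ ⦃n m : ℕ⦄ ⦃p p' : PW M n⦄ ⦃q q' : Fin n → PW M m⦄,
    r n p p' → (∀ i, r m (q i) (q' i)) → r m (pwSuper p q) (pwSuper p' q')

/-- `firstKAux k pre p` keeps those letters of `p` whose position is a left
`k`-witness, given that the prefix `pre` has already been read. -/
def firstKAux {M : Type*} {n : ℕ} (k : ℕ) : PW M n → PW M n → PW M n
  | _, [] => []
  | pre, l :: t =>
    if pre.countP (fun x => decide (x.1 = l.1)) < k
    then l :: firstKAux k (pre ++ [l]) t
    else firstKAux k (pre ++ [l]) t

/-- `firstK k p` keeps, for each value, the first `k` occurrences of that value in `p`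
(the letters at left `k`-witness positions). -/
def firstK {M : Type*} {n : ℕ} (k : ℕ) (p : PW M n) : PW M n := firstKAux k [] p

/-- `firstKR k p` keeps, for each value, the last `k` occurrences of that value in `p`:
it is the reverse of `firstK k` applied to the reverse of `p`. -/
def firstKR {M : Type*} {n : ℕ} (k : ℕ) (p : PW M n) : PW M n := (firstK k p.reverse).reverse

set_option linter.unusedSectionVars false

namespace Magn
variable {M : Type*} [Monoid M] {n m : ℕ}

def vals (p : PW M n) : List (Fin n) := p.map Prod.fst

@[simp] lemma vals_nil : vals ([] : PW M n) = [] := rfl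
@[simp] lemma vals_cons (l : Fin n × M) (p : PW M n) : vals (l :: p) = l.1 :: vals p := rfl
@[simp] lemma vals_append (p q : PW M n) : vals (p ++ q) = vals p ++ vals q := List.map_append

def g (s : List (Fin n)) : PW M n → PW M n
  | [] => []
  | l :: t => if l.1 ∈ s then g s t else l :: g (l.1 :: s) t

@[simp] lemma g_nil (s : List (Fin n)) : g s ([] : PW M n) = [] := rfl

lemma g_cons (s : List (Fin n)) (l : Fin n × M) (t : PW M n) :
    g s (l :: t) = if l.1 ∈ s then g s t else l :: g (l.1 :: s) t := rfl

lemma g_congr {s s' : List (Fin n)} (h : ∀ v, v ∈ s ↔ v ∈ s') (p : PW M n) :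
    g s p = g s' p := by
  induction p generalizing s s' with
  | nil => rfl
  | cons l t ih =>
    rw [g_cons, g_cons]
    by_cases hl : l.1 ∈ s
    · rw [if_pos hl, if_pos ((h _).1 hl)]; exact ih h
    · rw [if_neg hl, if_neg (fun c => hl ((h _).2 c))]
      refine congrArg _ (ih ?_)
      intro v; simp only [List.mem_cons]; rw [h v]

lemma firstKAux_eq_g (p pre : PW M n) : firstKAux (M := M) 1 pre p = g (vals pre) p := by
  induction p generalizing pre with
  | nil => rfl
  | cons l t ih =>
    rw [firstKAux, g_cons]
    have hc : pre.countP (fun x => decide (x.1 = l.1)) < 1 ↔ l.1 ∈ vals pre → False := by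
      rw [Nat.lt_one_iff, List.countP_eq_zero]
      constructor
      · intro h hm
        obtain ⟨x, hx, hfx⟩ := List.mem_map.1 hm
        exact absurd (by simpa using hfx) (by simpa using h x hx)
      · intro h x hx
        simp only [decide_eq_true_eq]
        intro he
        exact h (List.mem_map.2 ⟨x, hx, he⟩)
    by_cases hl : l.1 ∈ vals pre
    · rw [if_neg (by rw [hc]; tauto), if_pos hl, ih]
      refine g_congr ?_ t
      intro v
      simp only [vals_append, vals_cons, vals_nil, List.mem_append, List.mem_cons,
        List.not_mem_nil, or_false]
      constructor
      · rintro (h | rfl); · tauto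
        exact hl
      · tauto
    · rw [if_pos (hc.2 (fun c => absurd c hl)), if_neg hl, ih]
      refine congrArg _ (g_congr ?_ t)
      intro v
      simp only [vals_append, vals_cons, vals_nil, List.mem_append, List.mem_cons,
        List.not_mem_nil, or_false]
      tauto

lemma firstK_one (p : PW M n) : firstK 1 p = g [] p := firstKAux_eq_g p []

lemma firstKR_one (p : PW M n) : firstKR 1 p = (g [] p.reverse).reverse := by
  rw [firstKR, firstK_one]

lemma mem_g {s : List (Fin n)} {p : PW M n} {l : Fin n × M} (h : l ∈ g s p) : l ∈ p := by
  induction p generalizing s with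
  | nil => simpa using h
  | cons a t ih =>
    rw [g_cons] at h
    by_cases ha : a.1 ∈ s
    · rw [if_pos ha] at h; exact List.mem_cons_of_mem _ (ih h)
    · rw [if_neg ha] at h
      rcases List.mem_cons.1 h with h | h
      · exact h ▸ List.mem_cons_self
      · exact List.mem_cons_of_mem _ (ih h)

lemma vals_g_cover {s : List (Fin n)} {p : PW M n} {v : Fin n} (h : v ∈ vals p) :
    v ∈ s ∨ v ∈ vals (g s p) := by
  induction p generalizing s with
  | nil => simp at h
  | cons a t ih =>
    rw [g_cons]
    rcases (List.mem_cons.1 h) with h | h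
    · subst h
      by_cases ha : a.1 ∈ s
      · exact Or.inl ha
      · rw [if_neg ha]; right; simp
    · by_cases ha : a.1 ∈ s
      · rw [if_pos ha]; exact ih h
      · rw [if_neg ha]
        rcases ih (s := a.1 :: s) h with h | h
        · rcases List.mem_cons.1 h with h | h
          · right; rw [h]; simp
          · exact Or.inl h
        · right; simp [h]

lemma g_eq_nil {s : List (Fin n)} {p : PW M n} (h : ∀ l ∈ p, l.1 ∈ s) : g s p = [] := by
  induction p with
  | nil => rfl
  | cons a t ih =>
    rw [g_cons, if_pos (h a (List.mem_cons_self))]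
    exact ih (fun l hl => h l (List.mem_cons_of_mem _ hl))

lemma g_append (s : List (Fin n)) (x y : PW M n) :
    g s (x ++ y) = g s x ++ g (vals x ++ s) y := by
  induction x generalizing s with
  | nil => simp
  | cons a t ih =>
    rw [List.cons_append, g_cons, g_cons]
    by_cases ha : a.1 ∈ s
    · rw [if_pos ha, if_pos ha, ih]
      refine congrArg _ (g_congr ?_ y)
      intro v
      simp only [vals_cons, List.mem_append, List.mem_cons]
      constructor
      · tauto
      · rintro ((rfl | h) | h) <;> tauto
    · rw [if_neg ha, if_neg ha, List.cons_append, ih]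
      refine congrArg _ (congrArg _ (g_congr ?_ y))
      intro v; simp; tauto

lemma g_g {s s' : List (Fin n)} (h : ∀ v ∈ s', v ∈ s) (p : PW M n) :
    g s (g s' p) = g s p := by
  induction p generalizing s s' with
  | nil => rfl
  | cons a t ih =>
    rw [g_cons (s := s') , g_cons (s := s)]
    by_cases ha' : a.1 ∈ s'
    · rw [if_pos ha', if_pos (h _ ha')]; exact ih h
    · rw [if_neg ha']
      by_cases ha : a.1 ∈ s
      · rw [if_pos ha, g_cons, if_pos ha]
        refine ih ?_
        intro v hv
        rcases List.mem_cons.1 hv with rfl | h1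
        · exact ha
        · exact h _ h1
      · rw [if_neg ha, g_cons, if_neg ha]
        refine congrArg _ (ih ?_)
        intro v hv
        rcases List.mem_cons.1 hv with rfl | h1
        · exact List.mem_cons_self
        · exact List.mem_cons_of_mem _ (h _ h1)

lemma g_map_pig (s : List (Fin n)) (α : M) (p : PW M n) :
    g s (p.map (fun x => (x.1, α * x.2))) = (g s p).map (fun x => (x.1, α * x.2)) := by
  induction p generalizing s with
  | nil => rfl
  | cons a t ih =>
    rw [List.map_cons, g_cons, g_cons]
    by_cases ha : a.1 ∈ s
    · simpa [ha] using ih s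
    · simp only [ha, if_neg, if_false]
      simp only [List.map_cons]
      exact congrArg _ (ih _)


@[simp] lemma pwSuper_nil (q : Fin n → PW M m) : pwSuper ([] : PW M n) q = [] := rfl

lemma pwSuper_cons (l : Fin n × M) (t : PW M n) (q : Fin n → PW M m) :
    pwSuper (l :: t) q = (q l.1).map (fun x => (x.1, l.2 * x.2)) ++ pwSuper t q := by
  simp [pwSuper]

lemma pwSuper_append (x y : PW M n) (q : Fin n → PW M m) :
    pwSuper (x ++ y) q = pwSuper x q ++ pwSuper y q := by
  simp [pwSuper]

lemma vals_map_pig (α : M) (p : PW M m) :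
    vals (p.map (fun x => (x.1, α * x.2))) = vals p := by
  simp [vals, List.map_map, Function.comp]

lemma mem_vals_g_nil {p : PW M m} {v : Fin m} : v ∈ vals (g [] p) ↔ v ∈ vals p := by
  constructor
  · intro h
    obtain ⟨x, hx, hfx⟩ := List.mem_map.1 h
    exact hfx ▸ List.mem_map.2 ⟨x, mem_g hx, rfl⟩
  · intro h
    rcases vals_g_cover (s := []) h with h | h
    · simp at h
    · exact h

lemma superM1 (q : Fin n → PW M m) (p : PW M n) (s : List (Fin m)) :
    g s (pwSuper p q) = g s (pwSuper p (fun i => g [] (q i))) := by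
  induction p generalizing s with
  | nil => rfl
  | cons l t ih =>
    rw [pwSuper_cons, pwSuper_cons, g_append, g_append]
    have h1 : g s ((g [] (q l.1)).map (fun x => (x.1, l.2 * x.2)))
        = g s ((q l.1).map (fun x => (x.1, l.2 * x.2))) := by
      rw [g_map_pig, g_map_pig, g_g (by simp) (q l.1)]
    rw [h1]
    refine congrArg _ ?_
    rw [ih]
    refine g_congr ?_ _
    intro v
    simp only [List.mem_append, vals_map_pig, mem_vals_g_nil]

lemma superM2 (q : Fin n → PW M m) (p : PW M n) (sp : List (Fin n)) (s : List (Fin m))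
    (h : ∀ v ∈ sp, ∀ w ∈ vals (q v), w ∈ s) :
    g s (pwSuper p q) = g s (pwSuper (g sp p) q) := by
  induction p generalizing sp s with
  | nil => rfl
  | cons l t ih =>
    rw [pwSuper_cons, g_append, g_cons]
    by_cases hl : l.1 ∈ sp
    · rw [if_pos hl]
      have hA : g s ((q l.1).map (fun x => (x.1, l.2 * x.2))) = [] := by
        refine g_eq_nil ?_
        intro a ha
        obtain ⟨x, hx, hfx⟩ := List.mem_map.1 ha
        refine h l.1 hl a.1 ?_
        rw [← hfx]
        exact List.mem_map.2 ⟨x, hx, rfl⟩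
      rw [hA, List.nil_append]
      have hseen : g (vals ((q l.1).map (fun x => (x.1, l.2 * x.2))) ++ s) (pwSuper t q)
          = g s (pwSuper t q) := by
        refine g_congr ?_ _
        intro v
        simp only [List.mem_append, vals_map_pig]
        constructor
        · rintro (hv | hv)
          · exact h l.1 hl v hv
          · exact hv
        · exact Or.inr
      rw [hseen]
      exact ih sp s h
    · rw [if_neg hl, pwSuper_cons, g_append]
      refine congrArg _ ?_
      refine ih (l.1 :: sp) _ ?_
      intro v hv w hw
      rcases List.mem_cons.1 hv with rfl | hv
      · simp only [List.mem_append, vals_map_pig]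
        exact Or.inl hw
      · simp only [List.mem_append]
        exact Or.inr (h v hv w hw)

lemma master (p : PW M n) (q : Fin n → PW M m) :
    g [] (pwSuper p q) = g [] (pwSuper (g [] p) (fun i => g [] (q i))) := by
  rw [superM2 q p [] [] (by simp), superM1]

lemma pwSuper_reverse (p : PW M n) (q : Fin n → PW M m) :
    (pwSuper p q).reverse = pwSuper p.reverse (fun i => (q i).reverse) := by
  induction p with
  | nil => rfl
  | cons l t ih =>
    rw [pwSuper_cons, List.reverse_append, ih, List.reverse_cons, pwSuper_append]
    refine congrArg _ ?_
    simp [pwSuper, List.map_reverse]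


section Smallest

variable (r : ∀ k, PW M k → PW M k → Prop)

lemma ctxr (hEq : ∀ k, Equivalence (r k)) (hCC : IsCloneCong r)
    (X Y a b : PW M m) (h : r m a b) :
    r m (X ++ (a ++ Y)) (X ++ (b ++ Y)) := by
  have key := hCC (n := 3) (m := m)
    (p := [((0 : Fin 3), (1 : M)), ((1 : Fin 3), (1 : M)), ((2 : Fin 3), (1 : M))])
    (p' := [((0 : Fin 3), (1 : M)), ((1 : Fin 3), (1 : M)), ((2 : Fin 3), (1 : M))])
    (q := ![X, a, Y]) (q' := ![X, b, Y]) ((hEq 3).refl _) ?_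
  · simpa [pwSuper, one_mul] using key
  · intro i
    fin_cases i
    · exact (hEq m).refl _
    · exact h
    · exact (hEq m).refl _

lemma dupApp (hEq : ∀ k, Equivalence (r k)) (hCC : IsCloneCong r)
    (hDup : r 1 [((0 : Fin 1), (1 : M)), ((0 : Fin 1), (1 : M))] [((0 : Fin 1), (1 : M))])
    (p : PW M m) : r m (p ++ p) p := by
  have key := hCC (m := m) (q := fun _ => p) (q' := fun _ => p) hDup
    (fun _ => (hEq m).refl p)
  simpa [pwSuper, one_mul] using key

lemma midApp (hEq : ∀ k, Equivalence (r k)) (hCC : IsCloneCong r)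
    (hMid : ∀ α₁ α₂ α₃ : M,
      r 3 [((0 : Fin 3), α₁), ((1 : Fin 3), (1 : M)), ((0 : Fin 3), α₂),
          ((2 : Fin 3), (1 : M)), ((0 : Fin 3), α₃)]
        [((0 : Fin 3), α₁), ((1 : Fin 3), (1 : M)),
          ((2 : Fin 3), (1 : M)), ((0 : Fin 3), α₃)])
    (v : Fin m) (α₁ α₂ α₃ : M) (Q2 Q3 : PW M m) :
    r m ((v, α₁) :: (Q2 ++ (v, α₂) :: (Q3 ++ [(v, α₃)])))
      ((v, α₁) :: (Q2 ++ (Q3 ++ [(v, α₃)]))) := by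
  have key := hCC (n := 3) (m := m) (hMid α₁ α₂ α₃)
    (q := ![[(v, (1 : M))], Q2, Q3]) (q' := ![[(v, (1 : M))], Q2, Q3])
    (fun _ => (hEq m).refl _)
  simpa [pwSuper, one_mul, mul_one] using key

lemma removeMid (hEq : ∀ k, Equivalence (r k)) (hCC : IsCloneCong r)
    (hMid : ∀ α₁ α₂ α₃ : M,
      r 3 [((0 : Fin 3), α₁), ((1 : Fin 3), (1 : M)), ((0 : Fin 3), α₂),
          ((2 : Fin 3), (1 : M)), ((0 : Fin 3), α₃)]
        [((0 : Fin 3), α₁), ((1 : Fin 3), (1 : M)),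
          ((2 : Fin 3), (1 : M)), ((0 : Fin 3), α₃)])
    (X Y : PW M m) (v : Fin m) (α : M) (hX : v ∈ vals X) (hY : v ∈ vals Y) :
    r m (X ++ (v, α) :: Y) (X ++ Y) := by
  obtain ⟨x, hx, hfx⟩ := List.mem_map.1 hX
  obtain ⟨y, hy, hfy⟩ := List.mem_map.1 hY
  obtain ⟨X1, X2, rfl⟩ := List.append_of_mem hx
  obtain ⟨Y1, Y2, rfl⟩ := List.append_of_mem hy
  obtain ⟨v1, δ⟩ := x
  obtain ⟨v2, ε⟩ := y
  cases hfx
  cases hfy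
  have key := ctxr (M := M) r hEq hCC X1 Y2 _ _
    (midApp (M := M) r hEq hCC hMid v1 δ α ε (X2 ++ []) Y1)
  · simpa [List.append_assoc] using key

lemma stripL (hEq : ∀ k, Equivalence (r k)) (hCC : IsCloneCong r)
    (hMid : ∀ α₁ α₂ α₃ : M,
      r 3 [((0 : Fin 3), α₁), ((1 : Fin 3), (1 : M)), ((0 : Fin 3), α₂),
          ((2 : Fin 3), (1 : M)), ((0 : Fin 3), α₃)]
        [((0 : Fin 3), α₁), ((1 : Fin 3), (1 : M)),
          ((2 : Fin 3), (1 : M)), ((0 : Fin 3), α₃)])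
    (t : PW M m) : ∀ (X Y : PW M m), (∀ l ∈ t, l.1 ∈ vals Y) →
    r m (X ++ (t ++ Y)) (X ++ (g (vals X) t ++ Y)) := by
  induction t with
  | nil => intro X Y _; exact (hEq m).refl _
  | cons l t ih =>
    intro X Y h
    by_cases hl : l.1 ∈ vals X
    · have step1 : r m (X ++ ((l :: t) ++ Y)) (X ++ (t ++ Y)) := by
        have := removeMid (M := M) r hEq hCC hMid X (t ++ Y) l.1 l.2 hl
          (by
            have := h l (List.mem_cons_self)
            simp only [vals_append, List.mem_append]
            exact Or.inr this)
        simpa using this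
      have step2 := ih X Y (fun a ha => h a (List.mem_cons_of_mem _ ha))
      rw [g_cons, if_pos hl]
      exact (hEq m).trans step1 step2
    · have step2 := ih (X ++ [l]) Y (fun a ha => h a (List.mem_cons_of_mem _ ha))
      rw [g_cons, if_neg hl]
      have e1 : (X ++ [l]) ++ (t ++ Y) = X ++ ((l :: t) ++ Y) := by simp
      have e2 : g (vals (X ++ [l])) t = g (l.1 :: vals X) t := by
        refine g_congr ?_ t
        intro w
        simp only [vals_append, vals_cons, vals_nil, List.mem_append, List.mem_cons,
          List.not_mem_nil, or_false]
        tauto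
      have e3 : (X ++ [l]) ++ (g (l.1 :: vals X) t ++ Y)
          = X ++ ((l :: g (l.1 :: vals X) t) ++ Y) := by simp
      rw [e1, e2, e3] at step2
      exact step2


lemma toCanon (hEq : ∀ k, Equivalence (r k)) (hCC : IsCloneCong r)
    (hDup : r 1 [((0 : Fin 1), (1 : M)), ((0 : Fin 1), (1 : M))] [((0 : Fin 1), (1 : M))])
    (hMid : ∀ α₁ α₂ α₃ : M,
      r 3 [((0 : Fin 3), α₁), ((1 : Fin 3), (1 : M)), ((0 : Fin 3), α₂),
          ((2 : Fin 3), (1 : M)), ((0 : Fin 3), α₃)]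
        [((0 : Fin 3), α₁), ((1 : Fin 3), (1 : M)),
          ((2 : Fin 3), (1 : M)), ((0 : Fin 3), α₃)])
    (p : PW M m) : r m p (g [] p ++ (g [] p.reverse).reverse) := by
  classical
  set r' : ∀ k, PW M k → PW M k → Prop := fun k a b => r k a.reverse b.reverse with hr'
  have hEq' : ∀ k, Equivalence (r' k) := fun k =>
    ⟨fun a => (hEq k).refl _, fun h => (hEq k).symm h, fun h1 h2 => (hEq k).trans h1 h2⟩
  have hCC' : IsCloneCong r' := by
    intro n' m' a a' q q' h hq
    show r m' (pwSuper a q).reverse (pwSuper a' q').reverse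
    rw [pwSuper_reverse, pwSuper_reverse]
    exact hCC h hq
  have hMid' : ∀ α₁ α₂ α₃ : M,
      r' 3 [((0 : Fin 3), α₁), ((1 : Fin 3), (1 : M)), ((0 : Fin 3), α₂),
          ((2 : Fin 3), (1 : M)), ((0 : Fin 3), α₃)]
        [((0 : Fin 3), α₁), ((1 : Fin 3), (1 : M)),
          ((2 : Fin 3), (1 : M)), ((0 : Fin 3), α₃)] := by
    intro α₁ α₂ α₃
    show r 3 _ _
    have key := hCC (n := 3) (m := 3) (hMid α₃ α₂ α₁)
      (q := ![[((0 : Fin 3), (1 : M))], [((2 : Fin 3), (1 : M))], [((1 : Fin 3), (1 : M))]])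
      (q' := ![[((0 : Fin 3), (1 : M))], [((2 : Fin 3), (1 : M))], [((1 : Fin 3), (1 : M))]])
      (fun _ => (hEq 3).refl _)
    simpa [pwSuper, one_mul, mul_one] using key
  have h1 : r m (p ++ p) p := dupApp (M := M) r hEq hCC hDup p
  have h2 : r m (p ++ p) (g [] p ++ p) := by
    have := stripL (M := M) r hEq hCC hMid p [] p
      (fun l hl => List.mem_map.2 ⟨l, hl, rfl⟩)
    simpa using this
  have h3 : r m (g [] p ++ p) (g [] p ++ (g [] p.reverse).reverse) := by
    have := stripL (M := M) r' hEq' hCC' hMid' p.reverse [] ((g [] p).reverse)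
      (by
        intro l hl
        have hlp : l ∈ p := List.mem_reverse.1 hl
        show l.1 ∈ vals ((g [] p).reverse)
        unfold vals
        rw [List.map_reverse, List.mem_reverse]
        exact mem_vals_g_nil.2 (List.mem_map.2 ⟨l, hlp, rfl⟩))
    have := this
    rw [hr'] at this
    simp only [List.nil_append, vals_nil, List.reverse_append, List.reverse_reverse] at this
    exact this
  exact (hEq m).trans ((hEq m).symm h1) ((hEq m).trans h2 h3)

end Smallest

end Magn

open Magn in
/-- The relation `p ≡ p'` iff `first₁(p) = first₁(p')` and `first₁^R(p) = first₁^R(p')`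
is the smallest clone congruence of `P(M)` relating `1^e 1^e` with `1^e` and, for all
`α₁, α₂, α₃ ∈ M`, relating `1^{α₁} 2^e 1^{α₂} 3^e 1^{α₃}` with `1^{α₁} 2^e 3^e 1^{α₃}`. -/
theorem magn_smallest_cloneCongruence (M : Type*) [Monoid M] :
    (∀ n, Equivalence (fun p p' : PW M n =>
      firstK 1 p = firstK 1 p' ∧ firstKR 1 p = firstKR 1 p')) ∧
    IsCloneCong (fun n (p p' : PW M n) =>
      firstK 1 p = firstK 1 p' ∧ firstKR 1 p = firstKR 1 p') ∧
    (firstK 1 ([((0 : Fin 1), (1 : M)), ((0 : Fin 1), (1 : M))] : PW M 1)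
        = firstK 1 ([((0 : Fin 1), (1 : M))] : PW M 1) ∧
      firstKR 1 ([((0 : Fin 1), (1 : M)), ((0 : Fin 1), (1 : M))] : PW M 1)
        = firstKR 1 ([((0 : Fin 1), (1 : M))] : PW M 1)) ∧
    (∀ α₁ α₂ α₃ : M,
      firstK 1 ([((0 : Fin 3), α₁), ((1 : Fin 3), (1 : M)), ((0 : Fin 3), α₂),
          ((2 : Fin 3), (1 : M)), ((0 : Fin 3), α₃)] : PW M 3)
        = firstK 1 ([((0 : Fin 3), α₁), ((1 : Fin 3), (1 : M)),
          ((2 : Fin 3), (1 : M)), ((0 : Fin 3), α₃)] : PW M 3) ∧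
      firstKR 1 ([((0 : Fin 3), α₁), ((1 : Fin 3), (1 : M)), ((0 : Fin 3), α₂),
          ((2 : Fin 3), (1 : M)), ((0 : Fin 3), α₃)] : PW M 3)
        = firstKR 1 ([((0 : Fin 3), α₁), ((1 : Fin 3), (1 : M)),
          ((2 : Fin 3), (1 : M)), ((0 : Fin 3), α₃)] : PW M 3)) ∧
    (∀ r : ∀ n, PW M n → PW M n → Prop, (∀ n, Equivalence (r n)) → IsCloneCong r →
      r 1 [((0 : Fin 1), (1 : M)), ((0 : Fin 1), (1 : M))] [((0 : Fin 1), (1 : M))] →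
      (∀ α₁ α₂ α₃ : M,
        r 3 [((0 : Fin 3), α₁), ((1 : Fin 3), (1 : M)), ((0 : Fin 3), α₂),
            ((2 : Fin 3), (1 : M)), ((0 : Fin 3), α₃)]
          [((0 : Fin 3), α₁), ((1 : Fin 3), (1 : M)),
            ((2 : Fin 3), (1 : M)), ((0 : Fin 3), α₃)]) →
      ∀ (n : ℕ) (p p' : PW M n),
        (firstK 1 p = firstK 1 p' ∧ firstKR 1 p = firstKR 1 p') → r n p p') := by
  classical
  refine ⟨?_, ?_, ?_, ?_, ?_⟩
  · intro n
    exact ⟨fun p => ⟨rfl, rfl⟩, fun h => ⟨h.1.symm, h.2.symm⟩,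
      fun h1 h2 => ⟨h1.1.trans h2.1, h1.2.trans h2.2⟩⟩
  · intro n m p p' q q' hp hq
    constructor
    · have e1 : g [] p = g [] p' := by
        rw [← firstK_one, ← firstK_one]; exact hp.1
      have e2 : (fun i => g [] (q i)) = (fun i => g [] (q' i)) := funext fun i => by
        rw [← firstK_one, ← firstK_one]; exact (hq i).1
      rw [firstK_one, firstK_one, master p q, master p' q', e1, e2]
    · have e1 : g [] p.reverse = g [] p'.reverse := List.reverse_injective (by
        rw [← firstKR_one, ← firstKR_one]; exact hp.2)
      have e2 : (fun i => g [] ((q i).reverse)) = (fun i => g [] ((q' i).reverse)) :=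
        funext fun i => List.reverse_injective (by
          rw [← firstKR_one, ← firstKR_one]; exact (hq i).2)
      rw [firstKR_one, firstKR_one, pwSuper_reverse, pwSuper_reverse,
        master p.reverse _, master p'.reverse _, e1, e2]
  · constructor <;> simp [firstK_one, firstKR_one, g_cons]
  · intro α₁ α₂ α₃
    constructor <;> simp [firstK_one, firstKR_one, g_cons]
  · intro r hEq hCC hDup hMid n p p' h
    obtain ⟨h1, h2⟩ := h
    rw [firstK_one, firstK_one] at h1
    rw [firstKR_one, firstKR_one] at h2
    have c1 := toCanon (M := M) r hEq hCC hDup hMid p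
    have c2 := toCanon (M := M) r hEq hCC hDup hMid p'
    rw [h1, h2] at c1
    exact (hEq n).trans c1 ((hEq n).symm c2)
end

section
/- Let M be a monoid equipped with a linear order ≤, and let k ≥ 0. Call an M-pigmented word a k-stalactite if no step of ⇝_1 or ⇝_2 applies to it. Then every equivalence class of the relation ≡_k on P(M)(n), defined by p ≡_k p' iff first_k(p) = first_k(p') and p' is a permutation of p, contains exactly one k-stalactite. -/
/-- The number of letters of `p` whose value is `i`. -/
def countV {M : Type*} {n : ℕ} (p : PW M n) (i : Fin n) : ℕ :=
  p.countP (fun x => decide (x.1 = i))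

/-- `⇝₁`: swap two adjacent letters `i₁^{α₁} i₂^{α₂}` with distinct values, where the
first shown position is not a left `k`-witness and the second one is. -/
def StalStep1 {M : Type*} {n : ℕ} (k : ℕ) (u v : PW M n) : Prop :=
  ∃ (p p' : PW M n) (i₁ i₂ : Fin n) (α₁ α₂ : M),
    u = p ++ (i₁, α₁) :: (i₂, α₂) :: p' ∧ v = p ++ (i₂, α₂) :: (i₁, α₁) :: p' ∧
    i₁ ≠ i₂ ∧ k ≤ countV p i₁ ∧ countV p i₂ < k

/-- `⇝₂`: swap two adjacent distinct letters `i₁^{α₁} i₂^{α₂}` with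
`i₂^{α₂} ⊴ i₁^{α₁}`, where neither shown position is a left `k`-witness. -/
def StalStep2 {M : Type*} [LinearOrder M] {n : ℕ} (k : ℕ) (u v : PW M n) : Prop :=
  ∃ (p p' : PW M n) (i₁ i₂ : Fin n) (α₁ α₂ : M),
    u = p ++ (i₁, α₁) :: (i₂, α₂) :: p' ∧ v = p ++ (i₂, α₂) :: (i₁, α₁) :: p' ∧
    k ≤ countV p i₁ ∧ k ≤ countV (p ++ [(i₁, α₁)]) i₂ ∧
    (i₁, α₁) ≠ (i₂, α₂) ∧ (i₂ < i₁ ∨ (i₂ = i₁ ∧ α₂ ≤ α₁))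

/-- A `k`-stalactite: an `M`-pigmented word to which no step of `⇝₁` or `⇝₂` applies. -/
def IsStalactite {M : Type*} [LinearOrder M] {n : ℕ} (k : ℕ) (p : PW M n) : Prop :=
  ∀ v : PW M n, ¬ StalStep1 k p v ∧ ¬ StalStep2 k p v

set_option linter.unusedSectionVars false

section Aux
variable {M : Type*} {n : ℕ} (k : ℕ)

@[simp] lemma countV_nil (i : Fin n) : countV ([] : PW M n) i = 0 := rfl

lemma countV_append (u v : PW M n) (i : Fin n) :
    countV (u ++ v) i = countV u i + countV v i := List.countP_append

lemma countV_cons_self (l : Fin n × M) (t : PW M n) :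
    countV (l :: t) l.1 = countV t l.1 + 1 := by
  simp [countV, List.countP_cons]

lemma countV_cons_eq (l : Fin n × M) (t : PW M n) {i : Fin n} (h : l.1 = i) :
    countV (l :: t) i = countV t i + 1 := by
  subst h; exact countV_cons_self l t

lemma countV_cons_ne (l : Fin n × M) (t : PW M n) {i : Fin n} (h : l.1 ≠ i) :
    countV (l :: t) i = countV t i := by
  simp [countV, List.countP_cons, h]

lemma countV_snoc_self (pre : PW M n) (l : Fin n × M) :
    countV (pre ++ [l]) l.1 = countV pre l.1 + 1 := by
  rw [countV_append, countV_cons_self]; simp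

lemma countV_snoc_eq (pre : PW M n) (l : Fin n × M) {i : Fin n} (h : l.1 = i) :
    countV (pre ++ [l]) i = countV pre i + 1 := by
  subst h; exact countV_snoc_self pre l

lemma countV_snoc_ne (pre : PW M n) (l : Fin n × M) {i : Fin n} (h : l.1 ≠ i) :
    countV (pre ++ [l]) i = countV pre i := by
  rw [countV_append, countV_cons_ne _ _ h]; simp

lemma firstKAux_cons (pre : PW M n) (l : Fin n × M) (t : PW M n) :
    firstKAux k pre (l :: t) =
      if countV pre l.1 < k then l :: firstKAux k (pre ++ [l]) t
      else firstKAux k (pre ++ [l]) t := rfl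

/-- Lemma A: counting formula. -/
lemma countV_firstKAux (pre p : PW M n) (i : Fin n) :
    countV (firstKAux k pre p) i = min (countV p i) (k - countV pre i) := by
  induction p generalizing pre with
  | nil => simp [firstKAux]
  | cons l t ih =>
    rw [firstKAux_cons]
    by_cases h : countV pre l.1 < k
    · rw [if_pos h]
      rcases eq_or_ne l.1 i with rfl | hne
      · rw [countV_cons_self, countV_cons_self, ih, countV_snoc_self]; omega
      · rw [countV_cons_ne _ _ hne, countV_cons_ne _ _ hne, ih, countV_snoc_ne _ _ hne]
    · rw [if_neg h]
      rcases eq_or_ne l.1 i with rfl | hne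
      · rw [countV_cons_self, ih, countV_snoc_self]; omega
      · rw [countV_cons_ne _ _ hne, ih, countV_snoc_ne _ _ hne]

/-- Lemma C: firstKAux only depends on the truncated counts of the prefix. -/
lemma firstKAux_congr {pre pre' : PW M n} (p : PW M n)
    (h : ∀ i, min (countV pre i) k = min (countV pre' i) k) :
    firstKAux k pre p = firstKAux k pre' p := by
  induction p generalizing pre pre' with
  | nil => simp [firstKAux]
  | cons l t ih =>
    have hl := h l.1
    have hcond : countV pre l.1 < k ↔ countV pre' l.1 < k := by omega
    have hnext : ∀ i, min (countV (pre ++ [l]) i) k = min (countV (pre' ++ [l]) i) k := by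
      intro i
      have := h i
      rcases eq_or_ne l.1 i with rfl | hne
      · rw [countV_snoc_self, countV_snoc_self]; omega
      · rw [countV_snoc_ne _ _ hne, countV_snoc_ne _ _ hne]; omega
    rw [firstKAux_cons, firstKAux_cons]
    by_cases hc : countV pre l.1 < k
    · rw [if_pos hc, if_pos (hcond.mp hc), ih hnext]
    · rw [if_neg hc, if_neg (fun h' => hc (hcond.mpr h')), ih hnext]

/-- Idempotence. -/
lemma firstKAux_idem (pre p : PW M n) :
    firstKAux k pre (firstKAux k pre p) = firstKAux k pre p := by
  induction p generalizing pre with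
  | nil => simp [firstKAux]
  | cons l t ih =>
    rw [firstKAux_cons]
    by_cases h : countV pre l.1 < k
    · rw [if_pos h, firstKAux_cons, if_pos h, ih]
    · rw [if_neg h]
      have heq : firstKAux k pre (firstKAux k (pre ++ [l]) t)
          = firstKAux k (pre ++ [l]) (firstKAux k (pre ++ [l]) t) := by
        apply firstKAux_congr
        intro i
        rcases eq_or_ne l.1 i with rfl | hne
        · rw [countV_snoc_self]; omega
        · rw [countV_snoc_ne _ _ hne]
      rw [heq, ih]

/-- Lemma D: append. -/
lemma firstKAux_append (pre u v : PW M n) :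
    firstKAux k pre (u ++ v) = firstKAux k pre u ++ firstKAux k (pre ++ u) v := by
  induction u generalizing pre with
  | nil => simp [firstKAux]
  | cons l t ih =>
    rw [List.cons_append, firstKAux_cons, firstKAux_cons]
    by_cases h : countV pre l.1 < k
    · rw [if_pos h, if_pos h, ih, List.cons_append]
      simp [List.append_assoc]
    · rw [if_neg h, if_neg h, ih]
      simp [List.append_assoc]

/-- Lemma E: emptiness. -/
lemma firstKAux_eq_nil (pre t : PW M n) (h : ∀ x ∈ t, k ≤ countV pre x.1) :
    firstKAux k pre t = [] := by
  induction t generalizing pre with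
  | nil => rfl
  | cons l t ih =>
    rw [firstKAux_cons, if_neg (by have := h l (by simp); omega)]
    apply ih
    intro x hx
    have := h x (by simp [hx])
    rw [countV_append]
    omega

/-- P1gen: every kept position is a witness. -/
lemma firstKAux_witness (pre p : PW M n) {u v : PW M n} {x : Fin n × M}
    (h : firstKAux k pre p = u ++ x :: v) : countV (pre ++ u) x.1 < k := by
  induction p generalizing pre u with
  | nil => simp [firstKAux] at h
  | cons l t ih =>
    rw [firstKAux_cons] at h
    by_cases hc : countV pre l.1 < k
    · rw [if_pos hc] at h
      cases u with
      | nil =>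
        simp only [List.nil_append] at h
        obtain ⟨rfl, -⟩ := List.cons_eq_cons.mp h.symm
        simpa using hc
      | cons y u' =>
        rw [List.cons_append] at h
        obtain ⟨rfl, h'⟩ := List.cons_eq_cons.mp h
        have := ih (pre ++ [l]) h'
        rw [List.append_assoc] at this
        simpa using this
    · rw [if_neg hc] at h
      have := ih (pre ++ [l]) h
      have hle : countV (pre ++ u) x.1 ≤ countV (pre ++ [l] ++ u) x.1 := by
        rw [countV_append, countV_append, countV_append]
        omega
      omega

/-- The complement of firstKAux. -/
def restAux : PW M n → PW M n → PW M n
  | _, [] => []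
  | pre, l :: t =>
    if countV pre l.1 < k
    then restAux (pre ++ [l]) t
    else l :: restAux (pre ++ [l]) t

lemma perm_firstKAux_append_restAux (pre p : PW M n) :
    (firstKAux k pre p ++ restAux k pre p).Perm p := by
  induction p generalizing pre with
  | nil => simp [firstKAux, restAux]
  | cons l t ih =>
    rw [firstKAux_cons, restAux]
    by_cases h : countV pre l.1 < k
    · rw [if_pos h, if_pos h, List.cons_append]
      exact (ih (pre ++ [l])).cons l
    · rw [if_neg h, if_neg h]
      exact List.perm_middle.trans ((ih (pre ++ [l])).cons l)

lemma mem_restAux_count {pre p : PW M n} {x : Fin n × M} (h : x ∈ restAux k pre p) :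
    k < countV pre x.1 + countV p x.1 := by
  induction p generalizing pre with
  | nil => simp [restAux] at h
  | cons l t ih =>
    rw [restAux] at h
    by_cases hc : countV pre l.1 < k
    · rw [if_pos hc] at h
      have := ih h
      rcases eq_or_ne l.1 x.1 with he | hne
      · rw [countV_snoc_eq _ _ he] at this
        rw [countV_cons_eq _ _ he]
        omega
      · rw [countV_snoc_ne _ _ hne] at this
        rw [countV_cons_ne _ _ hne]
        omega
    · rw [if_neg hc] at h
      rcases List.mem_cons.mp h with rfl | h'
      · rw [countV_cons_self]
        omega
      · have := ih h'
        rcases eq_or_ne l.1 x.1 with he | hne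
        · rw [countV_snoc_eq _ _ he] at this
          rw [countV_cons_eq _ _ he]
          omega
        · rw [countV_snoc_ne _ _ hne] at this
          rw [countV_cons_ne _ _ hne]
          omega

end Aux
section Aux2
variable {M : Type*} [LinearOrder M] {n : ℕ}

/-- The lexicographic order on letters: value first, then pigment. -/
def lle (a b : Fin n × M) : Prop :=
  a.1 < b.1 ∨ (a.1 = b.1 ∧ a.2 ≤ b.2)

instance : DecidableRel (lle (M := M) (n := n)) := fun _ _ => by
  unfold lle; infer_instance

instance : IsTrans (Fin n × M) lle := by
  constructor
  rintro a b c (h | ⟨h1, h2⟩) (h' | ⟨h1', h2'⟩)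
  · exact Or.inl (h.trans h')
  · exact Or.inl (h1' ▸ h)
  · exact Or.inl (h1 ▸ h')
  · exact Or.inr ⟨h1.trans h1', h2.trans h2'⟩

instance : IsAntisymm (Fin n × M) lle := by
  constructor
  rintro a b (h | ⟨h1, h2⟩) (h' | ⟨h1', h2'⟩)
  · exact absurd h' (lt_asymm h)
  · exact absurd h (h1' ▸ lt_irrefl _)
  · exact absurd h' (h1 ▸ lt_irrefl _)
  · exact Prod.ext_iff.mpr ⟨h1, le_antisymm h2 h2'⟩

instance : IsTotal (Fin n × M) lle := by
  constructor
  intro a b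
  rcases lt_trichotomy a.1 b.1 with h | h | h
  · exact Or.inl (Or.inl h)
  · rcases le_total a.2 b.2 with h2 | h2
    · exact Or.inl (Or.inr ⟨h, h2⟩)
    · exact Or.inr (Or.inr ⟨h.symm, h2⟩)
  · exact Or.inr (Or.inl h)

lemma not_lle {a b : Fin n × M} (h : ¬ lle a b) : lle b a ∧ a ≠ b := by
  unfold lle at *
  push_neg at h
  obtain ⟨h1, h2⟩ := h
  rcases lt_trichotomy b.1 a.1 with hlt | heq | hgt
  · exact ⟨Or.inl hlt, fun he => by rw [he] at hlt; exact lt_irrefl _ hlt⟩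
  · have := h2 heq.symm
    refine ⟨Or.inr ⟨heq, le_of_lt this⟩, fun he => ?_⟩
    rw [he] at this
    exact lt_irrefl _ this
  · exact absurd hgt (not_lt.mpr h1)

/-- Splitting a decomposition across an append. -/
lemma split3 {f t p₁ p' : PW M n} {a b : Fin n × M}
    (h : f ++ t = p₁ ++ a :: b :: p') :
    (∃ w, f = p₁ ++ a :: b :: w) ∨ (f = p₁ ++ [a] ∧ t = b :: p') ∨
      (∃ w, p₁ = f ++ w ∧ t = w ++ a :: b :: p') := by
  rcases List.append_eq_append_iff.mp h with ⟨w, hw1, hw2⟩ | ⟨c, hc1, hc2⟩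
  · exact Or.inr (Or.inr ⟨w, hw1, hw2⟩)
  · match c, hc2 with
    | [], hc2 =>
      refine Or.inr (Or.inr ⟨[], by simpa using hc1.symm, ?_⟩)
      simpa using hc2.symm
    | [c1], hc2 =>
      obtain ⟨rfl, rfl⟩ := List.cons_eq_cons.mp hc2
      exact Or.inr (Or.inl ⟨hc1, rfl⟩)
    | c1 :: c2 :: cs, hc2 =>
      obtain ⟨rfl, hc2'⟩ := List.cons_eq_cons.mp hc2
      obtain ⟨rfl, rfl⟩ := List.cons_eq_cons.mp hc2'
      exact Or.inl ⟨cs, hc1⟩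

end Aux2


section Main
variable {M : Type*} [LinearOrder M] {n : ℕ} (k : ℕ)


/-- Sufficiency: a word of canonical shape is a stalactite. -/
lemma isStalactite_of (f t : PW M n)
    (P1 : ∀ u (x : Fin n × M) v, f = u ++ x :: v → countV u x.1 < k)
    (P2 : ∀ x ∈ t, k ≤ countV f x.1)
    (P3 : t.Pairwise lle) :
    IsStalactite k (f ++ t) := by
  intro v
  constructor
  · rintro ⟨p₁, p', i₁, i₂, α₁, α₂, hu, -, hne, h1, h2⟩
    rcases split3 hu with ⟨w, hw⟩ | ⟨hf, ht⟩ | ⟨w, hw, ht⟩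
    · exact absurd h1 (by simpa using not_le.mpr (P1 p₁ (i₁, α₁) _ hw))
    · exact absurd h1 (by simpa using not_le.mpr (P1 p₁ (i₁, α₁) [] hf))
    · have hb : (i₂, α₂) ∈ t := by rw [ht]; simp
      have := P2 _ hb
      have hle : countV f i₂ ≤ countV p₁ i₂ := by
        rw [hw, countV_append]; omega
      simp only at this
      omega
  · rintro ⟨p₁, p', i₁, i₂, α₁, α₂, hu, -, h1, h2, hne, hord⟩
    rcases split3 hu with ⟨w, hw⟩ | ⟨hf, ht⟩ | ⟨w, hw, ht⟩
    · exact absurd h1 (by simpa using not_le.mpr (P1 p₁ (i₁, α₁) _ hw))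
    · exact absurd h1 (by simpa using not_le.mpr (P1 p₁ (i₁, α₁) [] hf))
    · have hsort : ((i₁, α₁) :: (i₂, α₂) :: p').Pairwise lle := by
        rw [ht] at P3
        exact P3.sublist (List.sublist_append_right w _)
      have hab : lle (i₁, α₁) (i₂, α₂) :=
        (List.pairwise_cons.mp hsort).1 _ (by simp)
      have hba : lle (i₂, α₂) (i₁, α₁) := by
        unfold lle; simpa using hord
      exact hne (antisymm hab hba)

/-- In a stalactite, a letter following a non-witness letter is non-witness
and larger. -/
lemma stal_adj {q : PW M n} (hq : IsStalactite k q) {pre rest : PW M n}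
    {a b : Fin n × M} (h : q = pre ++ a :: b :: rest) (ha : k ≤ countV pre a.1) :
    k ≤ countV (pre ++ [a]) b.1 ∧ lle a b := by
  have hb : ¬ countV pre b.1 < k := by
    intro hlt
    have hne : a.1 ≠ b.1 := by
      intro he
      rw [he] at ha
      omega
    exact (hq (pre ++ b :: a :: rest)).1
      ⟨pre, rest, a.1, b.1, a.2, b.2, by simpa using h, by simp, hne, ha, hlt⟩
  have hb' : k ≤ countV (pre ++ [a]) b.1 := by
    rw [countV_append]; omega
  refine ⟨hb', ?_⟩
  by_contra hn
  obtain ⟨hba, hne⟩ := not_lle hn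
  have hne' : (a.1, a.2) ≠ (b.1, b.2) := by simpa using hne
  have hord : b.1 < a.1 ∨ (b.1 = a.1 ∧ b.2 ≤ a.2) := by
    rcases hba with h' | ⟨h1, h2⟩
    · exact Or.inl h'
    · exact Or.inr ⟨h1, h2⟩
  exact (hq (pre ++ b :: a :: rest)).2
    ⟨pre, rest, a.1, b.1, a.2, b.2, by simpa using h, by simp,
      ha, by simpa using hb', hne', hord⟩

/-- Once a non-witness letter occurs, the remaining word is sorted and
consists only of non-witness letters. -/
lemma sorted_tail (r : PW M n) : ∀ (pre : PW M n) (l : Fin n × M),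
    k ≤ countV pre l.1 →
    (∀ u (a b : Fin n × M) v, l :: r = u ++ a :: b :: v →
      k ≤ countV (pre ++ u) a.1 → k ≤ countV (pre ++ u ++ [a]) b.1 ∧ lle a b) →
    (l :: r).Pairwise lle ∧ firstKAux k (pre ++ [l]) r = [] := by
  induction r with
  | nil => exact fun pre l _ _ => ⟨List.pairwise_singleton _ l, rfl⟩
  | cons b r' ih =>
    intro pre l hl H
    obtain ⟨hb, hlb⟩ := H [] l b r' rfl (by simpa using hl)
    rw [List.append_nil] at hb
    obtain ⟨hsort, hnil⟩ := ih (pre ++ [l]) b hb (by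
      intro u a c v h1 h2
      have hEq : pre ++ [l] ++ u = pre ++ l :: u := by simp
      have := H (l :: u) a c v (by rw [h1]; rfl) (by rwa [hEq] at h2)
      rwa [← hEq] at this)
    refine ⟨?_, ?_⟩
    · rw [List.pairwise_cons]
      refine ⟨?_, hsort⟩
      intro y hy
      rcases List.mem_cons.mp hy with rfl | hy'
      · exact hlb
      · exact Trans.trans hlb ((List.pairwise_cons.mp hsort).1 y hy')
    · rw [firstKAux_cons, if_neg (by omega)]
      exact hnil

/-- Decomposition of a stalactite-like word. -/
lemma stal_decomp (rest : PW M n) : ∀ (pre : PW M n),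
    (∀ u (a b : Fin n × M) v, rest = u ++ a :: b :: v →
      k ≤ countV (pre ++ u) a.1 → k ≤ countV (pre ++ u ++ [a]) b.1 ∧ lle a b) →
    ∃ t, rest = firstKAux k pre rest ++ t ∧ t.Pairwise lle := by
  induction rest with
  | nil => exact fun pre _ => ⟨[], rfl, List.Pairwise.nil⟩
  | cons l r ih =>
    intro pre H
    by_cases hc : countV pre l.1 < k
    · obtain ⟨t, hr, hs⟩ := ih (pre ++ [l]) (by
        intro u a b v h1 h2
        have hEq : pre ++ [l] ++ u = pre ++ l :: u := by simp
        have := H (l :: u) a b v (by rw [h1]; rfl) (by rwa [hEq] at h2)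
        rwa [← hEq] at this)
      refine ⟨t, ?_, hs⟩
      rw [firstKAux_cons, if_pos hc, List.cons_append, ← hr]
    · have hl : k ≤ countV pre l.1 := not_lt.mp hc
      obtain ⟨hsort, hnil⟩ := sorted_tail k r pre l hl H
      refine ⟨l :: r, ?_, hsort⟩
      rw [firstKAux_cons, if_neg hc, hnil, List.nil_append]

end Main

/-- Every equivalence class of the relation `p ≡ₖ p'` iff `firstK k p = firstK k p'`
and `p'` is a permutation of `p` contains exactly one `k`-stalactite. -/
theorem stalactite_unique_in_class (M : Type*) [Monoid M] [LinearOrder M]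
    (k : ℕ) (n : ℕ) (p : PW M n) :
    ∃! q : PW M n, (firstK k q = firstK k p ∧ q.Perm p) ∧ IsStalactite k q := by
  classical
  set t0 := List.insertionSort lle (restAux k [] p) with ht0
  have hpermr : (firstK k p ++ restAux k [] p).Perm p :=
    perm_firstKAux_append_restAux k [] p
  have hpermt0 : t0.Perm (restAux k [] p) := List.perm_insertionSort _ _
  have hq0perm : (firstK k p ++ t0).Perm p :=
    ((List.perm_append_left_iff (firstK k p)).mpr hpermt0).trans hpermr
  have key : ∀ x ∈ t0, countV (firstK k p) x.1 = k := by
    intro x hx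
    have hxr : x ∈ restAux k [] p := hpermt0.mem_iff.mp hx
    have h1 := mem_restAux_count k hxr
    have h2 := countV_firstKAux k [] p x.1
    simp only [countV_nil, Nat.sub_zero] at h1 h2
    have : countV (firstK k p) x.1 = min (countV p x.1) k := h2
    omega
  have h1 : firstKAux k [] (firstK k p) = firstK k p := firstKAux_idem k [] p
  have hfk : firstK k (firstK k p ++ t0) = firstK k p := by
    show firstKAux k [] (firstK k p ++ t0) = firstK k p
    rw [firstKAux_append, List.nil_append, h1,
      firstKAux_eq_nil k (firstK k p) t0 (fun x hx => (key x hx).ge), List.append_nil]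
  have hstal : IsStalactite k (firstK k p ++ t0) := by
    apply isStalactite_of k
    · intro u x v h
      have := firstKAux_witness k [] p (u := u) (v := v) (x := x) h
      simpa using this
    · exact fun x hx => (key x hx).ge
    · exact List.pairwise_insertionSort _ _
  refine ⟨firstK k p ++ t0, ⟨⟨hfk, hq0perm⟩, hstal⟩, ?_⟩
  rintro q ⟨⟨hq1, hq2⟩, hq3⟩
  have H : ∀ u (a b : Fin n × M) v, q = u ++ a :: b :: v →
      k ≤ countV (([] : PW M n) ++ u) a.1 →
      k ≤ countV (([] : PW M n) ++ u ++ [a]) b.1 ∧ lle a b := by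
    intro u a b v hdec hcnt
    have := stal_adj k hq3 hdec (by simpa using hcnt)
    simpa using this
  obtain ⟨t, hqt, hts⟩ := stal_decomp k q [] H
  have hqt' : q = firstK k p ++ t := by rw [hqt, ← hq1]; rfl
  have hperm : t.Perm t0 := by
    have hpp : (firstK k p ++ t).Perm (firstK k p ++ t0) := by
      rw [← hqt']; exact hq2.trans hq0perm.symm
    exact (List.perm_append_left_iff _).mp hpp
  rw [hqt', hperm.eq_of_pairwise' hts (List.pairwise_insertionSort _ _)]
end
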